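/- Let n ≥ 2 and a > 2−n. Suppose u ∈ C²(ℝⁿ₊) ∩ C⁰(closure of ℝⁿ₊) satisfies div(yₙ^a ∇u) = 0 in ℝⁿ₊, u > 1/2 in ℝⁿ₊, and u = 1 on ∂ℝⁿ₊. Then for every x ∈ ∂ℝⁿ₊ and every λ > 0, u_{x,λ}(y) ≤ u(y) for all y ∈ ℝⁿ₊ with |y−x| ≥ λ, where u_{x,λ}(y) = (λ/|y−x|)^{n−2+a} u(x + λ²(y−x)/|y−x|²). -/

import Mathlib

open Real Filter

/-- Partial derivative of `u` in the `i`-th coordinate direction. -/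
noncomputable def partialD {n : ℕ} (i : Fin n) (u : EuclideanSpace ℝ (Fin n) → ℝ)
    (y : EuclideanSpace ℝ (Fin n)) : ℝ :=
  fderiv ℝ u y (EuclideanSpace.single i 1)

/-- The Laplacian of `u`, as a sum of repeated partial derivatives. -/
noncomputable def lapl {n : ℕ} (u : EuclideanSpace ℝ (Fin n) → ℝ)
    (y : EuclideanSpace ℝ (Fin n)) : ℝ :=
  ∑ j, partialD j (fun z => partialD j u z) y

/-- The weighted operator `div(yᵢ^a ∇u) = yᵢ^a Δu + a yᵢ^(a-1) ∂u/∂yᵢ`,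
where `i` plays the role of the last coordinate. -/
noncomputable def divA {n : ℕ} (i : Fin n) (a : ℝ) (u : EuclideanSpace ℝ (Fin n) → ℝ)
    (y : EuclideanSpace ℝ (Fin n)) : ℝ :=
  (y i) ^ a * lapl u y + a * (y i) ^ (a - 1) * partialD i u y

/-- The inversion `y ↦ x + λ²(y-x)/|y-x|²` centered at `x` with radius `λ`. -/
noncomputable def inversion {n : ℕ} (x : EuclideanSpace ℝ (Fin n)) (lam : ℝ)
    (y : EuclideanSpace ℝ (Fin n)) : EuclideanSpace ℝ (Fin n) :=
  x + (lam ^ 2 / ‖y - x‖ ^ 2) • (y - x)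

/-- The Kelvin-type transform `u_{x,λ}(y) = (λ/|y-x|)^(n-2+a) u(x + λ²(y-x)/|y-x|²)`. -/
noncomputable def kelvin {n : ℕ} (a : ℝ) (x : EuclideanSpace ℝ (Fin n)) (lam : ℝ)
    (u : EuclideanSpace ℝ (Fin n) → ℝ) (y : EuclideanSpace ℝ (Fin n)) : ℝ :=
  (lam / ‖y - x‖) ^ ((n : ℝ) - 2 + a) * u (inversion x lam y)

namespace MS
variable {n : ℕ}

local notation "E" => EuclideanSpace ℝ (Fin n)

/-- `f` has `j`-th partial derivative `c` at `y`. -/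
def HP (j : Fin n) (f : E → ℝ) (y : E) (c : ℝ) : Prop :=
  ∃ L : E →L[ℝ] ℝ, HasFDerivAt f L y ∧ L (EuclideanSpace.single j 1) = c

theorem HP.differentiableAt {j : Fin n} {f : E → ℝ} {y : E} {c : ℝ} (h : HP j f y c) :
    DifferentiableAt ℝ f y := by
  obtain ⟨L, hL, -⟩ := h; exact hL.differentiableAt

theorem HP.partialD_eq {j : Fin n} {f : E → ℝ} {y : E} {c : ℝ} (h : HP j f y c) :
    partialD j f y = c := by
  obtain ⟨L, hL, hc⟩ := h
  rw [partialD, hL.fderiv]; exact hc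

theorem hp_const (j : Fin n) (y : E) (c : ℝ) : HP j (fun _ => c) y 0 :=
  ⟨0, hasFDerivAt_const c y, rfl⟩

theorem HP.add {j : Fin n} {f g : E → ℝ} {y : E} {c d : ℝ} (hf : HP j f y c) (hg : HP j g y d) :
    HP j (fun z => f z + g z) y (c + d) := by
  obtain ⟨L, hL, hc⟩ := hf; obtain ⟨M, hM, hd⟩ := hg
  exact ⟨L + M, hL.add hM, by simp [hc, hd]⟩

theorem HP.neg {j : Fin n} {f : E → ℝ} {y : E} {c : ℝ} (hf : HP j f y c) :
    HP j (fun z => -f z) y (-c) := by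
  obtain ⟨L, hL, hc⟩ := hf
  exact ⟨-L, hL.neg, by simp [hc]⟩

theorem HP.sub {j : Fin n} {f g : E → ℝ} {y : E} {c d : ℝ} (hf : HP j f y c) (hg : HP j g y d) :
    HP j (fun z => f z - g z) y (c - d) := by
  simpa [sub_eq_add_neg] using hf.add hg.neg

theorem HP.mul {j : Fin n} {f g : E → ℝ} {y : E} {c d : ℝ} (hf : HP j f y c) (hg : HP j g y d) :
    HP j (fun z => f z * g z) y (c * g y + f y * d) := by
  obtain ⟨L, hL, hc⟩ := hf; obtain ⟨M, hM, hd⟩ := hg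
  exact ⟨f y • M + g y • L, hL.mul hM, by simp [hc, hd]; ring⟩

theorem HP.const_mul {j : Fin n} {f : E → ℝ} {y : E} {c : ℝ} (hf : HP j f y c) (d : ℝ) :
    HP j (fun z => d * f z) y (d * c) := by
  simpa using (hp_const j y d).mul hf

theorem HP.sum {j : Fin n} {ι : Type*} {s : Finset ι} {f : ι → E → ℝ} {y : E} {c : ι → ℝ}
    (hf : ∀ k ∈ s, HP j (f k) y (c k)) :
    HP j (fun z => ∑ k ∈ s, f k z) y (∑ k ∈ s, c k) := by
  classical
  induction s using Finset.induction with
  | empty => simpa using hp_const j y 0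
  | insert k s hni ih =>
    simp only [Finset.sum_insert hni]
    exact (hf k (Finset.mem_insert_self k s)).add
      (ih fun l hl => hf l (Finset.mem_insert_of_mem hl))

theorem HP.inv {j : Fin n} {f : E → ℝ} {y : E} {c : ℝ} (hf : HP j f y c) (h0 : f y ≠ 0) :
    HP j (fun z => (f z)⁻¹) y (-c / f y ^ 2) := by
  obtain ⟨L, hL, hc⟩ := hf
  refine ⟨(-(f y ^ 2)⁻¹ : ℝ) • L, (hasDerivAt_inv h0).comp_hasFDerivAt y hL, by simp [hc]; ring⟩

theorem HP.rpow_const {j : Fin n} {f : E → ℝ} {y : E} {c p : ℝ} (hf : HP j f y c)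
    (h0 : f y ≠ 0) :
    HP j (fun z => f z ^ p) y (p * f y ^ (p - 1) * c) := by
  obtain ⟨L, hL, hc⟩ := hf
  exact ⟨(p * f y ^ (p - 1)) • L, hL.rpow_const (Or.inl h0), by simp [hc]⟩

theorem HP.congr_nhds {j : Fin n} {f g : E → ℝ} {y : E} {c : ℝ} (hf : HP j f y c)
    (h : f =ᶠ[nhds y] g) : HP j g y c := by
  obtain ⟨L, hL, hc⟩ := hf
  exact ⟨L, hL.congr_of_eventuallyEq h.symm, hc⟩

/-- expansion of a continuous linear functional in the Euclidean basis -/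
theorem clm_expand (L : E →L[ℝ] ℝ) (w : E) : L w = ∑ k, w k * L (EuclideanSpace.single k 1) := by
  have hw : w = ∑ k, (w k : ℝ) • EuclideanSpace.single k (1 : ℝ) := by
    ext m
    rw [WithLp.ofLp_sum, Fintype.sum_apply]
    simp [EuclideanSpace.single_apply]
  conv_lhs => rw [hw]
  rw [map_sum]
  simp



/-- squared distance to `x`, written coordinatewise -/
noncomputable def qf (x : E) (y : E) : ℝ := ∑ k, (y k - x k) ^ 2

theorem qf_eq_norm (x y : E) : qf x y = ‖y - x‖ ^ 2 := by
  rw [qf, ← real_inner_self_eq_norm_sq]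
  rw [PiLp.inner_apply]
  simp [PiLp.sub_apply]

theorem qf_pos {x y : E} (h : y ≠ x) : 0 < qf x y := by
  rw [qf_eq_norm]
  have : ‖y - x‖ ≠ 0 := by simpa [sub_eq_zero] using h
  positivity

theorem qf_nonneg (x y : E) : 0 ≤ qf x y := Finset.sum_nonneg fun k _ => sq_nonneg _

/-- derivative of coordinates -/
theorem hp_coord (j k : Fin n) (x y : E) :
    HP j (fun z => z k - x k) y (if k = j then 1 else 0) := by
  refine ⟨EuclideanSpace.proj k, ?_, by simp [EuclideanSpace.single_apply]⟩
  simpa using ((EuclideanSpace.proj (𝕜 := ℝ) k).hasFDerivAt.sub_const (x k))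

theorem hp_qf (j : Fin n) (x y : E) : HP j (qf x) y (2 * (y j - x j)) := by
  have h : HP j (fun z => ∑ k, (z k - x k) ^ 2) y
      (∑ k, if k = j then 2 * (y k - x k) else 0) := by
    refine HP.sum fun k _ => ?_
    have := (hp_coord j k x y).mul (hp_coord j k x y)
    have h2 : HP j (fun z => (z k - x k) * (z k - x k)) y
        (if k = j then 2 * (y k - x k) else 0) := by
      convert this using 1
      by_cases h : k = j <;> simp [h] <;> ring
    convert h2 using 2 with z
    · ring
  show HP j (fun z => ∑ k, (z k - x k) ^ 2) y _
  simpa using h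

/-- the inversion map written via qf -/
theorem inversion_eq (x : E) (lam : ℝ) (y : E) :
    inversion x lam y = x + (lam ^ 2 / qf x y) • (y - x) := by
  rw [inversion, qf_eq_norm]

theorem inversion_apply (x : E) (lam : ℝ) (y : E) (k : Fin n) :
    inversion x lam y k = x k + lam ^ 2 / qf x y * (y k - x k) := by
  rw [inversion_eq]; simp [PiLp.add_apply, PiLp.smul_apply, PiLp.sub_apply]

/-- matrix of first partials of the inversion -/
noncomputable def Dc (x : E) (lam : ℝ) (j k : Fin n) (y : E) : ℝ :=
  -(2 * lam ^ 2 * (y j - x j)) / qf x y ^ 2 * (y k - x k)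
    + lam ^ 2 / qf x y * (if k = j then 1 else 0)

/-- the full derivative of the inversion -/
theorem hasFDerivAt_inversion (x : E) (lam : ℝ) {y : E} (hy : y ≠ x) :
    HasFDerivAt (inversion x lam)
      ((lam ^ 2 * (qf x y)⁻¹) • ContinuousLinearMap.id ℝ E
        + ((lam ^ 2) • ((-(qf x y ^ 2)⁻¹ : ℝ) •
            (∑ k, (2 * (y k - x k)) • EuclideanSpace.proj k : E →L[ℝ] ℝ))).smulRight (y - x)) y := by
  have hq : HasFDerivAt (qf x) (∑ k, (2 * (y k - x k)) • EuclideanSpace.proj k : E →L[ℝ] ℝ) y := by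
    have h1 : ∀ k : Fin n, HasFDerivAt (fun z : E => (z k - x k) ^ 2)
        ((2 * (y k - x k)) • EuclideanSpace.proj k : E →L[ℝ] ℝ) y := by
      intro k
      have h1 : HasFDerivAt (fun z : E => z k - x k) (EuclideanSpace.proj k : E →L[ℝ] ℝ) y := by
        simpa using ((EuclideanSpace.proj (𝕜 := ℝ) k).hasFDerivAt.sub_const (x k))
      have h2 := h1.mul h1
      have e1 : (fun z : E => (z k - x k) * (z k - x k)) = fun z : E => (z k - x k) ^ 2 := by
        funext z; ring
      have e2 : (y k - x k) • (EuclideanSpace.proj k : E →L[ℝ] ℝ)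
            + (y k - x k) • (EuclideanSpace.proj k : E →L[ℝ] ℝ)
          = (2 * (y k - x k)) • EuclideanSpace.proj k := by
        rw [← add_smul]; congr 1; ring
      rw [e2] at h2; rw [← e1]; exact h2
    have := HasFDerivAt.fun_sum (fun k (_ : k ∈ Finset.univ) => h1 k)
    exact this
  have hq0 : qf x y ≠ 0 := ne_of_gt (qf_pos hy)
  have hinv : HasFDerivAt (fun z => (qf x z)⁻¹)
      ((-(qf x y ^ 2)⁻¹ : ℝ) • (∑ k, (2 * (y k - x k)) • EuclideanSpace.proj k : E →L[ℝ] ℝ)) y :=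
    (hasDerivAt_inv hq0).comp_hasFDerivAt y hq
  have hc := hinv.const_mul (lam ^ 2)
  have hid : HasFDerivAt (fun z : E => z - x) (ContinuousLinearMap.id ℝ E) y := by
    simpa using (hasFDerivAt_id y).sub_const x
  have hmain := (hc.smul hid).const_add x
  have heq : inversion x lam = fun z => x + (lam ^ 2 * (qf x z)⁻¹) • (z - x) := by
    funext z; rw [inversion_eq, div_eq_mul_inv]
  rw [heq]; exact hmain

theorem inversion_deriv_apply (x : E) (lam : ℝ) {y : E} (j k : Fin n) :
    (((lam ^ 2 * (qf x y)⁻¹) • ContinuousLinearMap.id ℝ E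
        + ((lam ^ 2) • ((-(qf x y ^ 2)⁻¹ : ℝ) •
            (∑ m, (2 * (y m - x m)) • EuclideanSpace.proj m : E →L[ℝ] ℝ))).smulRight (y - x))
        (EuclideanSpace.single j 1)) k
      = Dc x lam j k y := by
  have hsum : ((∑ m, (2 * (y m - x m)) • EuclideanSpace.proj m : E →L[ℝ] ℝ))
      (EuclideanSpace.single j 1) = 2 * (y j - x j) := by
    rw [ContinuousLinearMap.sum_apply]
    rw [Finset.sum_eq_single j]
    · simp [EuclideanSpace.single_apply]
    · intro m _ hm
      simp [EuclideanSpace.single_apply, hm, Ne.symm hm]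
    · simp
  simp only [ContinuousLinearMap.add_apply, ContinuousLinearMap.smul_apply,
    ContinuousLinearMap.smulRight_apply, ContinuousLinearMap.id_apply, hsum]
  simp only [PiLp.add_apply, PiLp.smul_apply, PiLp.sub_apply, smul_eq_mul,
    EuclideanSpace.single_apply, Dc]
  split_ifs with h
  · field_simp
    ring
  · field_simp
    ring


theorem HP.congr_c {j : Fin n} {f : E → ℝ} {y : E} {c c' : ℝ} (h : HP j f y c) (e : c = c') :
    HP j f y c' := e ▸ h

theorem hp_comp_inversion (x : E) (lam : ℝ) {y : E} (hy : y ≠ x) {f : E → ℝ}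
    (hf : DifferentiableAt ℝ f (inversion x lam y)) (j : Fin n) :
    HP j (fun z => f (inversion x lam z)) y
      (∑ k, Dc x lam j k y * partialD k f (inversion x lam y)) := by
  have hinv := hasFDerivAt_inversion x lam hy
  have hcomp := (hf.hasFDerivAt.comp y hinv)
  refine ⟨_, hcomp, ?_⟩
  rw [ContinuousLinearMap.comp_apply, clm_expand]
  refine Finset.sum_congr rfl fun k _ => ?_
  rw [inversion_deriv_apply]
  rfl

theorem inversion_coord (x : E) (lam : ℝ) (y : E) (i : Fin n) (hx : x i = 0) :
    inversion x lam y i = lam ^ 2 / qf x y * y i := by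
  rw [inversion_apply, hx]; ring

theorem inversion_mem (x : E) (lam : ℝ) {y : E} (i : Fin n) (hx : x i = 0) (hyi : 0 < y i)
    (hy : y ≠ x) (hlam : 0 < lam) : 0 < inversion x lam y i := by
  rw [inversion_coord x lam y i hx]
  have := qf_pos hy
  positivity

/-- S1 -/
theorem sum_z_sq (x y : E) : ∑ j, (y j - x j) ^ 2 = qf x y := rfl

/-- S2 -/
theorem sum_z_Dc (x : E) (lam : ℝ) {y : E} (hy : y ≠ x) (k : Fin n) :
    ∑ j, (y j - x j) * Dc x lam j k y = -(lam ^ 2) * (y k - x k) / qf x y := by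
  have hq := qf_pos hy
  have hq0 : qf x y ≠ 0 := ne_of_gt hq
  have hterm : ∀ j, (y j - x j) * Dc x lam j k y
      = -(2 * lam ^ 2) / qf x y ^ 2 * (y k - x k) * (y j - x j) ^ 2
        + lam ^ 2 / qf x y * (if k = j then (y j - x j) else 0) := by
    intro j; rw [Dc]; split_ifs with h
    · subst h; ring
    · ring
  rw [Finset.sum_congr rfl fun j _ => hterm j, Finset.sum_add_distrib,
    ← Finset.mul_sum, ← Finset.mul_sum, sum_z_sq,
    Finset.sum_ite_eq Finset.univ k (fun j => y j - x j)]
  simp only [Finset.mem_univ, if_true]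
  field_simp
  ring

/-- S3 (conformality) -/
theorem sum_Dc_Dc (x : E) (lam : ℝ) {y : E} (hy : y ≠ x) (k l : Fin n) :
    ∑ j, Dc x lam j k y * Dc x lam j l y
      = lam ^ 4 / qf x y ^ 2 * (if k = l then 1 else 0) := by
  have hq := qf_pos hy
  have hq0 : qf x y ≠ 0 := ne_of_gt hq
  have hterm : ∀ j, Dc x lam j k y * Dc x lam j l y
      = 4 * lam ^ 4 / qf x y ^ 4 * (y k - x k) * (y l - x l) * (y j - x j) ^ 2
        + (-(2 * lam ^ 4) / qf x y ^ 3 * (y k - x k)) * (if l = j then (y j - x j) else 0)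
        + (-(2 * lam ^ 4) / qf x y ^ 3 * (y l - x l)) * (if k = j then (y j - x j) else 0)
        + (lam ^ 4 / qf x y ^ 2) * ((if k = j then 1 else 0) * (if l = j then 1 else 0)) := by
    intro j; rw [Dc, Dc]
    split_ifs with h1 h2 <;> (try subst h1) <;> (try subst h2) <;> (field_simp; ring)
  rw [Finset.sum_congr rfl fun j _ => hterm j, Finset.sum_add_distrib, Finset.sum_add_distrib,
    Finset.sum_add_distrib, ← Finset.mul_sum, ← Finset.mul_sum, ← Finset.mul_sum,
    ← Finset.mul_sum, sum_z_sq,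
    Finset.sum_ite_eq Finset.univ l (fun j => y j - x j),
    Finset.sum_ite_eq Finset.univ k (fun j => y j - x j)]
  have hdd : ∑ j, ((if k = j then (1:ℝ) else 0) * (if l = j then 1 else 0))
      = if k = l then 1 else 0 := by
    rw [Finset.sum_eq_single k]
    · by_cases h : k = l
      · subst h; simp
      · simp [h, Ne.symm h]
    · intro m _ hm; simp [Ne.symm hm]
    · simp
  rw [hdd]
  simp only [Finset.mem_univ, if_true]
  split_ifs with h
  · subst h; field_simp; ring
  · field_simp; ring

/-- second partials of the inversion matrix entries -/
noncomputable def DDc (x : E) (lam : ℝ) (j k : Fin n) (y : E) : ℝ :=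
  -(2 * lam ^ 2) * (y k - x k) / qf x y ^ 2
    - 4 * lam ^ 2 * (if k = j then 1 else 0) * (y j - x j) / qf x y ^ 2
    + 8 * lam ^ 2 * (y j - x j) ^ 2 * (y k - x k) / qf x y ^ 3

theorem hp_qf_sq_inv (x : E) (lam : ℝ) {y : E} (hy : y ≠ x) (j : Fin n) :
    HP j (fun z => (qf x z ^ 2)⁻¹) y (-(4 * qf x y * (y j - x j)) / (qf x y ^ 2) ^ 2) := by
  have hq0 : qf x y ≠ 0 := ne_of_gt (qf_pos hy)
  have hq := hp_qf j x y
  have hq2 : HP j (fun z => qf x z ^ 2) y (4 * qf x y * (y j - x j)) := by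
    refine ((hq.mul hq).congr_c (by ring)).congr_nhds ?_
    filter_upwards with z using by ring
  exact hq2.inv (pow_ne_zero 2 hq0)

theorem hp_Dc (x : E) (lam : ℝ) {y : E} (hy : y ≠ x) (j k : Fin n) :
    HP j (fun z => Dc x lam j k z) y (DDc x lam j k y) := by
  have hq0 : qf x y ≠ 0 := ne_of_gt (qf_pos hy)
  have hzj := hp_coord j j x y
  have hzk := hp_coord j k x y
  have hq := hp_qf j x y
  have hinv2 := hp_qf_sq_inv x lam hy j
  have hinv1 : HP j (fun z => (qf x z)⁻¹) y (-(2 * (y j - x j)) / qf x y ^ 2) := hq.inv hq0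
  have hA : HP j (fun z => -(2 * lam ^ 2 * (z j - x j))) y (-(2 * lam ^ 2)) := by
    refine ((hzj.const_mul (2 * lam ^ 2)).neg).congr_c (by simp)
  have h1 : HP j (fun z => (-(2 * lam ^ 2 * (z j - x j)) * (qf x z ^ 2)⁻¹) * (z k - x k)) y
      ((-(2 * lam ^ 2) * (qf x y ^ 2)⁻¹
          + -(2 * lam ^ 2 * (y j - x j)) * (-(4 * qf x y * (y j - x j)) / (qf x y ^ 2) ^ 2))
          * (y k - x k)
        + (-(2 * lam ^ 2 * (y j - x j)) * (qf x y ^ 2)⁻¹) * (if k = j then 1 else 0)) :=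
    (hA.mul hinv2).mul hzk
  have h2 : HP j (fun z => (lam ^ 2 * (qf x z)⁻¹) * (if k = j then (1:ℝ) else 0)) y
      ((lam ^ 2 * (-(2 * (y j - x j)) / qf x y ^ 2)) * (if k = j then 1 else 0) +
        (lam ^ 2 * (qf x y)⁻¹) * 0) :=
    (hinv1.const_mul (lam ^ 2)).mul (hp_const j y _)
  refine ((h1.add h2).congr_nhds ?_).congr_c ?_
  · filter_upwards with z
    rw [Dc]
    field_simp
  · rw [DDc]
    by_cases h : k = j
    · simp only [h, if_pos rfl]
      field_simp
      ring
    · simp only [if_neg h]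
      field_simp
      ring

/-- S4 -/
theorem sum_DDc (x : E) (lam : ℝ) {y : E} (hy : y ≠ x) (k : Fin n) :
    ∑ j, DDc x lam j k y = (4 - 2 * n) * lam ^ 2 * (y k - x k) / qf x y ^ 2 := by
  have hq := qf_pos hy
  have hq0 : qf x y ≠ 0 := ne_of_gt hq
  have hterm : ∀ j, DDc x lam j k y
      = -(2 * lam ^ 2) * (y k - x k) / qf x y ^ 2
        + (-(4 * lam ^ 2) / qf x y ^ 2) * (if k = j then (y j - x j) else 0)
        + (8 * lam ^ 2 * (y k - x k) / qf x y ^ 3) * (y j - x j) ^ 2 := by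
    intro j; rw [DDc]; split_ifs with h
    · subst h; ring
    · ring
  rw [Finset.sum_congr rfl fun j _ => hterm j, Finset.sum_add_distrib, Finset.sum_add_distrib,
    Finset.sum_const, ← Finset.mul_sum, ← Finset.mul_sum, sum_z_sq,
    Finset.sum_ite_eq Finset.univ k (fun j => y j - x j)]
  simp only [Finset.mem_univ, if_true, Finset.card_univ, Fintype.card_fin, nsmul_eq_mul]
  field_simp
  ring

section Master

variable (x : EuclideanSpace ℝ (Fin n)) (lam : ℝ) (e : ℝ) (u : EuclideanSpace ℝ (Fin n) → ℝ)

/-- value of u at the inverted point -/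
noncomputable def U0 (y : E) : ℝ := u (inversion x lam y)
/-- first partials of u at the inverted point -/
noncomputable def Uk (k : Fin n) (y : E) : ℝ := partialD k u (inversion x lam y)
/-- second partials of u at the inverted point -/
noncomputable def Ukl (k l : Fin n) (y : E) : ℝ :=
  partialD l (fun z => partialD k u z) (inversion x lam y)
/-- the transformed function -/
noncomputable def V0 (y : E) : ℝ := qf x y ^ e * u (inversion x lam y)
/-- its first partials -/
noncomputable def Phi (j : Fin n) (y : E) : ℝ :=
  e * qf x y ^ (e - 1) * (2 * (y j - x j)) * U0 x lam u y
    + qf x y ^ e * ∑ k, Dc x lam j k y * Uk x lam u k y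

variable {i : Fin n}

theorem diffAt_of_contDiffOn {w : E} (hu2 : ContDiffOn ℝ 2 u {w | 0 < w i}) (hw : 0 < w i) :
    DifferentiableAt ℝ u w := by
  have hopen : IsOpen {w : E | 0 < w i} := by
    have : Continuous fun w : E => w i := (EuclideanSpace.proj (𝕜 := ℝ) i).continuous
    exact isOpen_lt continuous_const this
  exact (hu2.contDiffAt (hopen.mem_nhds hw)).differentiableAt (by norm_num)

theorem diffAt_partialD_of_contDiffOn {w : E} (hu2 : ContDiffOn ℝ 2 u {w | 0 < w i})
    (hw : 0 < w i) (k : Fin n) : DifferentiableAt ℝ (fun z => partialD k u z) w := by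
  have hopen : IsOpen {w : E | 0 < w i} := by
    have : Continuous fun w : E => w i := (EuclideanSpace.proj (𝕜 := ℝ) i).continuous
    exact isOpen_lt continuous_const this
  have h1 : ContDiffAt ℝ 1 (fderiv ℝ u) w :=
    (hu2.contDiffAt (hopen.mem_nhds hw)).fderiv_right (le_refl 2)
  have h2 : DifferentiableAt ℝ (fderiv ℝ u) w := h1.differentiableAt (by norm_num)
  exact (ContinuousLinearMap.apply ℝ ℝ (EuclideanSpace.single k 1)).differentiableAt.comp w h2

/-- M1: first partials of the transformed function -/
theorem hp_V0 (hu2 : ContDiffOn ℝ 2 u {w | 0 < w i}) (hx : x i = 0) (hlam : 0 < lam)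
    {y : E} (hyi : 0 < y i) (hy : y ≠ x) (j : Fin n) :
    HP j (V0 x lam e u) y (Phi x lam e u j y) := by
  have hq0 : qf x y ≠ 0 := ne_of_gt (qf_pos hy)
  have hxi : 0 < inversion x lam y i := inversion_mem x lam i hx hyi hy hlam
  have hqe : HP j (fun z => qf x z ^ e) y (e * qf x y ^ (e - 1) * (2 * (y j - x j))) :=
    ((hp_qf j x y).rpow_const hq0).congr_c (by ring)
  have hcomp : HP j (fun z => u (inversion x lam z)) y
      (∑ k, Dc x lam j k y * Uk x lam u k y) :=
    hp_comp_inversion x lam hy (diffAt_of_contDiffOn u hu2 hxi) j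
  exact ((hqe.mul hcomp).congr_c (by simp only [Phi, U0]; try ring))

/-- M2: second partials -/
theorem hp_Phi (hu2 : ContDiffOn ℝ 2 u {w | 0 < w i}) (hx : x i = 0) (hlam : 0 < lam)
    {y : E} (hyi : 0 < y i) (hy : y ≠ x) (j : Fin n) :
    HP j (Phi x lam e u j) y
      ((e * (e - 1) * qf x y ^ (e - 1 - 1) * (2 * (y j - x j)) * (2 * (y j - x j))
          + e * qf x y ^ (e - 1) * 2) * U0 x lam u y
        + e * qf x y ^ (e - 1) * (2 * (y j - x j)) * (∑ k, Dc x lam j k y * Uk x lam u k y)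
        + e * qf x y ^ (e - 1) * (2 * (y j - x j)) * (∑ k, Dc x lam j k y * Uk x lam u k y)
        + qf x y ^ e * ∑ k, (DDc x lam j k y * Uk x lam u k y
            + Dc x lam j k y * (∑ l, Dc x lam j l y * Ukl x lam u k l y))) := by
  have hq0 : qf x y ≠ 0 := ne_of_gt (qf_pos hy)
  have hxi : 0 < inversion x lam y i := inversion_mem x lam i hx hyi hy hlam
  have hU0 : HP j (U0 x lam u) y (∑ k, Dc x lam j k y * Uk x lam u k y) :=
    hp_comp_inversion x lam hy (diffAt_of_contDiffOn u hu2 hxi) j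
  have hUk : ∀ k, HP j (Uk x lam u k) y (∑ l, Dc x lam j l y * Ukl x lam u k l y) := fun k =>
    hp_comp_inversion x lam hy (diffAt_partialD_of_contDiffOn u hu2 hxi k) j
  have hqe1 : HP j (fun z => qf x z ^ (e - 1)) y
      ((e - 1) * qf x y ^ (e - 1 - 1) * (2 * (y j - x j))) :=
    ((hp_qf j x y).rpow_const hq0).congr_c (by ring)
  have hzj := hp_coord j j x y
  have hT1a : HP j (fun z => e * qf x z ^ (e - 1) * (2 * (z j - x j))) y
      (e * ((e - 1) * qf x y ^ (e - 1 - 1) * (2 * (y j - x j))) * (2 * (y j - x j))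
        + e * qf x y ^ (e - 1) * 2) := by
    have h1 : HP j (fun z => qf x z ^ (e - 1) * (2 * (z j - x j))) y
        ((e - 1) * qf x y ^ (e - 1 - 1) * (2 * (y j - x j)) * (2 * (y j - x j))
          + qf x y ^ (e - 1) * 2) :=
      (hqe1.mul (hzj.const_mul 2)).congr_c (by simp only [eq_self_iff_true, if_true]; ring)
    exact (((h1.const_mul e).congr_nhds
      (by filter_upwards with z using by ring)).congr_c (by ring))
  have hT1 := hT1a.mul hU0
  have hqe : HP j (fun z => qf x z ^ e) y (e * qf x y ^ (e - 1) * (2 * (y j - x j))) :=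
    ((hp_qf j x y).rpow_const hq0).congr_c (by ring)
  have hSum : HP j (fun z => ∑ k, Dc x lam j k z * Uk x lam u k z) y
      (∑ k, (DDc x lam j k y * Uk x lam u k y
        + Dc x lam j k y * (∑ l, Dc x lam j l y * Ukl x lam u k l y))) := by
    refine HP.sum fun k _ => ?_
    have := (hp_Dc x lam hy j k).mul (hUk k)
    exact this.congr_c (by ring)
  have hT2 := hqe.mul hSum
  have := hT1.add hT2
  refine (this.congr_nhds ?_).congr_c (by simp only [U0]; ring)
  filter_upwards with z
  simp only [Phi]

theorem eventually_mem_domain {y : E} {i : Fin n} (hyi : 0 < y i) (hy : y ≠ x) :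
    ∀ᶠ z in nhds y, 0 < z i ∧ z ≠ x := by
  have hopen : IsOpen {w : EuclideanSpace ℝ (Fin n) | 0 < w i ∧ w ≠ x} := by
    refine IsOpen.inter (isOpen_lt continuous_const
      (EuclideanSpace.proj (𝕜 := ℝ) i).continuous) isOpen_ne
  exact hopen.eventually_mem ⟨hyi, hy⟩

/-- M3: the Laplacian of the transformed function -/
theorem lapl_V0 (hu2 : ContDiffOn ℝ 2 u {w | 0 < w i}) (hx : x i = 0) (hlam : 0 < lam)
    {y : EuclideanSpace ℝ (Fin n)} (hyi : 0 < y i) (hy : y ≠ x) :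
    lapl (V0 x lam e u) y
      = (4 * e * (e - 1) * (qf x y ^ (e - 1 - 1) * qf x y) + 2 * n * e * qf x y ^ (e - 1))
          * U0 x lam u y
        + (-(4 * e) * lam ^ 2 * (qf x y ^ (e - 1) / qf x y)
            + (4 - 2 * n) * lam ^ 2 * (qf x y ^ e / qf x y ^ 2))
          * (∑ k, (y k - x k) * Uk x lam u k y)
        + lam ^ 4 * (qf x y ^ e / qf x y ^ 2) * lapl u (inversion x lam y) := by
  have hq := qf_pos hy
  have hq0 : qf x y ≠ 0 := ne_of_gt hq
  have hsnd : ∀ j, partialD j (fun z => partialD j (V0 x lam e u) z) y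
      = (e * (e - 1) * qf x y ^ (e - 1 - 1) * (2 * (y j - x j)) * (2 * (y j - x j))
          + e * qf x y ^ (e - 1) * 2) * U0 x lam u y
        + e * qf x y ^ (e - 1) * (2 * (y j - x j)) * (∑ k, Dc x lam j k y * Uk x lam u k y)
        + e * qf x y ^ (e - 1) * (2 * (y j - x j)) * (∑ k, Dc x lam j k y * Uk x lam u k y)
        + qf x y ^ e * ∑ k, (DDc x lam j k y * Uk x lam u k y
            + Dc x lam j k y * (∑ l, Dc x lam j l y * Ukl x lam u k l y)) := by
    intro j
    have hev : (fun z => partialD j (V0 x lam e u) z) =ᶠ[nhds y] Phi x lam e u j := by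
      filter_upwards [eventually_mem_domain x hyi hy] with z hz
      exact (hp_V0 x lam e u hu2 hx hlam hz.1 hz.2 j).partialD_eq
    have h1 : partialD j (fun z => partialD j (V0 x lam e u) z) y
        = partialD j (Phi x lam e u j) y := by
      rw [partialD, partialD, hev.fderiv_eq]
    rw [h1, (hp_Phi x lam e u hu2 hx hlam hyi hy j).partialD_eq]
  rw [lapl, Finset.sum_congr rfl fun j _ => hsnd j]
  -- split the j-sum into five pieces
  have split : ∀ j : Fin n,
      ((e * (e - 1) * qf x y ^ (e - 1 - 1) * (2 * (y j - x j)) * (2 * (y j - x j))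
          + e * qf x y ^ (e - 1) * 2) * U0 x lam u y
        + e * qf x y ^ (e - 1) * (2 * (y j - x j)) * (∑ k, Dc x lam j k y * Uk x lam u k y)
        + e * qf x y ^ (e - 1) * (2 * (y j - x j)) * (∑ k, Dc x lam j k y * Uk x lam u k y)
        + qf x y ^ e * ∑ k, (DDc x lam j k y * Uk x lam u k y
            + Dc x lam j k y * (∑ l, Dc x lam j l y * Ukl x lam u k l y)))
      = (4 * e * (e - 1) * qf x y ^ (e - 1 - 1) * U0 x lam u y) * (y j - x j) ^ 2
        + 2 * e * qf x y ^ (e - 1) * U0 x lam u y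
        + (4 * e * qf x y ^ (e - 1)) * ((y j - x j) * (∑ k, Dc x lam j k y * Uk x lam u k y))
        + qf x y ^ e * (∑ k, DDc x lam j k y * Uk x lam u k y)
        + qf x y ^ e * (∑ k, Dc x lam j k y * (∑ l, Dc x lam j l y * Ukl x lam u k l y)) := by
    intro j
    rw [Finset.sum_add_distrib]
    ring
  rw [Finset.sum_congr rfl fun j _ => split j]
  rw [Finset.sum_add_distrib, Finset.sum_add_distrib, Finset.sum_add_distrib,
    Finset.sum_add_distrib]
  -- piece 1
  have hp1 : ∑ j, (4 * e * (e - 1) * qf x y ^ (e - 1 - 1) * U0 x lam u y) * (y j - x j) ^ 2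
      = 4 * e * (e - 1) * qf x y ^ (e - 1 - 1) * U0 x lam u y * qf x y := by
    rw [← Finset.mul_sum, sum_z_sq]
  -- piece 2
  have hp2 : ∑ _j : Fin n, 2 * e * qf x y ^ (e - 1) * U0 x lam u y
      = n * (2 * e * qf x y ^ (e - 1) * U0 x lam u y) := by
    rw [Finset.sum_const, Finset.card_univ, Fintype.card_fin, nsmul_eq_mul]
  -- piece 3
  have hp3 : ∑ j, (4 * e * qf x y ^ (e - 1)) * ((y j - x j) * ∑ k, Dc x lam j k y * Uk x lam u k y)
      = (4 * e * qf x y ^ (e - 1)) * (-(lam ^ 2) / qf x y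
          * ∑ k, (y k - x k) * Uk x lam u k y) := by
    rw [← Finset.mul_sum]
    congr 1
    have swap : ∑ j, (y j - x j) * ∑ k, Dc x lam j k y * Uk x lam u k y
        = ∑ k, (∑ j, (y j - x j) * Dc x lam j k y) * Uk x lam u k y := by
      have h1 : ∀ j, (y j - x j) * ∑ k, Dc x lam j k y * Uk x lam u k y
          = ∑ k, (y j - x j) * Dc x lam j k y * Uk x lam u k y := by
        intro j; rw [Finset.mul_sum]; exact Finset.sum_congr rfl fun k _ => by ring
      rw [Finset.sum_congr rfl fun j _ => h1 j, Finset.sum_comm]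
      exact Finset.sum_congr rfl fun k _ => by rw [Finset.sum_mul]
    rw [swap, Finset.mul_sum]
    refine Finset.sum_congr rfl fun k _ => ?_
    rw [sum_z_Dc x lam hy k]
    ring
  -- piece 4
  have hp4 : ∑ j, qf x y ^ e * (∑ k, DDc x lam j k y * Uk x lam u k y)
      = qf x y ^ e * ((4 - 2 * n) * lam ^ 2 / qf x y ^ 2
          * ∑ k, (y k - x k) * Uk x lam u k y) := by
    rw [← Finset.mul_sum]
    congr 1
    rw [Finset.sum_comm]
    have : ∀ k, ∑ j, DDc x lam j k y * Uk x lam u k y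
        = ((4 - 2 * n) * lam ^ 2 * (y k - x k) / qf x y ^ 2) * Uk x lam u k y := by
      intro k; rw [← Finset.sum_mul, sum_DDc x lam hy k]
    rw [Finset.sum_congr rfl fun k _ => this k, Finset.mul_sum]
    exact Finset.sum_congr rfl fun k _ => by ring
  -- piece 5
  have hp5 : ∑ j, qf x y ^ e * (∑ k, Dc x lam j k y * (∑ l, Dc x lam j l y * Ukl x lam u k l y))
      = qf x y ^ e * (lam ^ 4 / qf x y ^ 2 * lapl u (inversion x lam y)) := by
    rw [← Finset.mul_sum]
    congr 1
    have step1 : ∀ j, ∑ k, Dc x lam j k y * (∑ l, Dc x lam j l y * Ukl x lam u k l y)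
        = ∑ k, ∑ l, Dc x lam j k y * Dc x lam j l y * Ukl x lam u k l y := by
      intro j
      refine Finset.sum_congr rfl fun k _ => ?_
      rw [Finset.mul_sum]
      exact Finset.sum_congr rfl fun l _ => by ring
    rw [Finset.sum_congr rfl fun j _ => step1 j, Finset.sum_comm]
    have step2 : ∀ k, ∑ j, ∑ l, Dc x lam j k y * Dc x lam j l y * Ukl x lam u k l y
        = ∑ l, (∑ j, Dc x lam j k y * Dc x lam j l y) * Ukl x lam u k l y := by
      intro k
      rw [Finset.sum_comm]
      exact Finset.sum_congr rfl fun l _ => by rw [Finset.sum_mul]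
    rw [Finset.sum_congr rfl fun k _ => step2 k]
    have step3 : ∀ k, ∑ l, (∑ j, Dc x lam j k y * Dc x lam j l y) * Ukl x lam u k l y
        = lam ^ 4 / qf x y ^ 2 * Ukl x lam u k k y := by
      intro k
      rw [Finset.sum_congr rfl fun l _ => by rw [sum_Dc_Dc x lam hy k l]]
      rw [Finset.sum_eq_single k]
      · simp
      · intro l _ hl; simp [Ne.symm hl]
      · simp
    rw [Finset.sum_congr rfl fun k _ => step3 k, ← Finset.mul_sum]
    congr 1
  rw [hp1, hp2, hp3, hp4, hp5]
  field_simp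
  ring

/-- S5 -/
theorem sum_Dc_row (i : Fin n) {y : EuclideanSpace ℝ (Fin n)} (hy : y ≠ x) :
    ∑ k, Dc x lam i k y * Uk x lam u k y
      = -(2 * lam ^ 2 * (y i - x i)) / qf x y ^ 2 * (∑ k, (y k - x k) * Uk x lam u k y)
        + lam ^ 2 / qf x y * Uk x lam u i y := by
  have hterm : ∀ k, Dc x lam i k y * Uk x lam u k y
      = -(2 * lam ^ 2 * (y i - x i)) / qf x y ^ 2 * ((y k - x k) * Uk x lam u k y)
        + lam ^ 2 / qf x y * (if k = i then Uk x lam u k y else 0) := by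
    intro k; rw [Dc]; split_ifs with h
    · subst h; ring
    · ring
  rw [Finset.sum_congr rfl fun k _ => hterm k, Finset.sum_add_distrib,
    ← Finset.mul_sum, ← Finset.mul_sum,
    Finset.sum_ite_eq' Finset.univ i (fun k => Uk x lam u k y)]
  simp only [Finset.mem_univ, if_true]

/-- M5: the transformed function is `divA`-harmonic -/
theorem divA_V0 {i : Fin n} {a : ℝ} (hu2 : ContDiffOn ℝ 2 u {w | 0 < w i})
    (heq : ∀ w, 0 < w i → divA i a u w = 0)
    (hx : x i = 0) (hlam : 0 < lam) {y : EuclideanSpace ℝ (Fin n)} (hyi : 0 < y i) (hy : y ≠ x)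
    (he : e = -(((n : ℝ) - 2 + a) / 2)) :
    divA i a (V0 x lam e u) y = 0 := by
  have hq := qf_pos hy
  have hq0 : qf x y ≠ 0 := ne_of_gt hq
  have hlam0 : lam ≠ 0 := ne_of_gt hlam
  have hyi0 : y i ≠ 0 := ne_of_gt hyi
  have hxi : 0 < inversion x lam y i := inversion_mem x lam i hx hyi hy hlam
  have hxival : inversion x lam y i = lam ^ 2 / qf x y * y i := inversion_coord x lam y i hx
  -- the equation for u at the inverted point
  have hL : lapl u (inversion x lam y)
      = -a * Uk x lam u i y / (inversion x lam y i) := by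
    have h0 := heq (inversion x lam y) hxi
    rw [divA] at h0
    have hsub : inversion x lam y i ^ (a - 1) = inversion x lam y i ^ a / inversion x lam y i := by
      rw [Real.rpow_sub hxi, Real.rpow_one]
    rw [hsub] at h0
    have hne : inversion x lam y i ^ a ≠ 0 := ne_of_gt (Real.rpow_pos_of_pos hxi a)
    have hne2 : inversion x lam y i ≠ 0 := ne_of_gt hxi
    have : partialD i u (inversion x lam y) = Uk x lam u i y := rfl
    rw [this] at h0
    field_simp at h0 ⊢
    have h1 : inversion x lam y i ^ a
        * (lapl u (inversion x lam y) * inversion x lam y i + a * Uk x lam u i y) = 0 := by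
      rw [mul_add]; linarith [h0]
    rcases mul_eq_zero.mp h1 with h2 | h2
    · exact absurd h2 hne
    · linarith
  -- expand divA of V0
  rw [divA, lapl_V0 x lam e u hu2 hx hlam hyi hy,
    (hp_V0 x lam e u hu2 hx hlam hyi hy i).partialD_eq, Phi, sum_Dc_row x lam u i hy, hL]
  -- rpow bookkeeping
  have h1 : qf x y ^ (e - 1) = qf x y ^ e / qf x y := by
    rw [Real.rpow_sub hq, Real.rpow_one]
  have h2 : qf x y ^ (e - 1 - 1) = qf x y ^ e / qf x y / qf x y := by
    rw [Real.rpow_sub hq, Real.rpow_one, Real.rpow_sub hq, Real.rpow_one]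
  have h3 : (y i) ^ (a - 1) = (y i) ^ a / y i := by
    rw [Real.rpow_sub hyi, Real.rpow_one]
  rw [h1, h2, h3, hxival, hx, he]
  have hrne : qf x y ^ (-(((n : ℝ) - 2 + a) / 2)) ≠ 0 :=
    ne_of_gt (Real.rpow_pos_of_pos hq _)
  have hane : (y i) ^ a ≠ 0 := ne_of_gt (Real.rpow_pos_of_pos hyi a)
  field_simp
  ring

theorem contDiffAt_qf {y : EuclideanSpace ℝ (Fin n)} : ContDiffAt ℝ 2 (qf x) y := by
  have : ContDiff ℝ 2 (qf x) := by
    apply ContDiff.sum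
    intro k _
    exact ((EuclideanSpace.proj (𝕜 := ℝ) k).contDiff.sub contDiff_const).pow 2
  exact this.contDiffAt

theorem contDiffAt_inversion {y : EuclideanSpace ℝ (Fin n)} (hy : y ≠ x) :
    ContDiffAt ℝ 2 (inversion x lam) y := by
  have hq0 : qf x y ≠ 0 := ne_of_gt (qf_pos hy)
  have h1 : ContDiffAt ℝ 2 (fun z => lam ^ 2 * (qf x z)⁻¹) y :=
    contDiffAt_const.mul ((contDiffAt_qf x).inv hq0)
  have h2 : ContDiffAt ℝ 2 (fun z : EuclideanSpace ℝ (Fin n) => z - x) y :=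
    contDiffAt_id.sub contDiffAt_const
  have h3 : ContDiffAt ℝ 2 (fun z => x + (lam ^ 2 * (qf x z)⁻¹) • (z - x)) y :=
    contDiffAt_const.add (h1.smul h2)
  have heq : inversion x lam = fun z => x + (lam ^ 2 * (qf x z)⁻¹) • (z - x) := by
    funext z; rw [inversion_eq, div_eq_mul_inv]
  rw [heq]; exact h3

theorem contDiffAt_V0 {i : Fin n} (hu2 : ContDiffOn ℝ 2 u {w | 0 < w i}) (hx : x i = 0)
    (hlam : 0 < lam) {y : EuclideanSpace ℝ (Fin n)} (hyi : 0 < y i) (hy : y ≠ x) :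
    ContDiffAt ℝ 2 (V0 x lam e u) y := by
  have hq0 : qf x y ≠ 0 := ne_of_gt (qf_pos hy)
  have hxi : 0 < inversion x lam y i := inversion_mem x lam i hx hyi hy hlam
  have hopen : IsOpen {w : EuclideanSpace ℝ (Fin n) | 0 < w i} :=
    isOpen_lt continuous_const (EuclideanSpace.proj (𝕜 := ℝ) i).continuous
  have hcomp : ContDiffAt ℝ 2 (fun z => u (inversion x lam z)) y :=
    ContDiffAt.comp y (hu2.contDiffAt (hopen.mem_nhds hxi)) (contDiffAt_inversion x lam hy)
  have hrpow : ContDiffAt ℝ 2 (fun z => qf x z ^ e) y :=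
    ContDiffAt.comp y (Real.contDiffAt_rpow_const_of_ne hq0) (contDiffAt_qf x)
  exact hrpow.mul hcomp

end Master

section Operator

variable {i : Fin n} {a : ℝ}

theorem partialD_congr_of_eventuallyEq {f g : EuclideanSpace ℝ (Fin n) → ℝ}
    {y : EuclideanSpace ℝ (Fin n)} (h : f =ᶠ[nhds y] g) (j : Fin n) :
    partialD j f y = partialD j g y := by
  rw [partialD, partialD, h.fderiv_eq]

theorem divA_congr_open {f g : EuclideanSpace ℝ (Fin n) → ℝ} {O : Set (EuclideanSpace ℝ (Fin n))}
    (hO : IsOpen O) {y : EuclideanSpace ℝ (Fin n)} (hy : y ∈ O)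
    (hfg : ∀ z ∈ O, f z = g z) : divA i a f y = divA i a g y := by
  have hev : ∀ z ∈ O, (fun w => f w) =ᶠ[nhds z] fun w => g w := fun z hz => by
    filter_upwards [hO.eventually_mem hz] with w hw using hfg w hw
  rw [divA, divA, lapl, lapl]
  congr 1
  · congr 1
    refine Finset.sum_congr rfl fun j _ => ?_
    have h1 : (fun z => partialD j f z) =ᶠ[nhds y] fun z => partialD j g z := by
      filter_upwards [hO.eventually_mem hy] with z hz
      exact partialD_congr_of_eventuallyEq (hev z hz) j
    exact partialD_congr_of_eventuallyEq h1 j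
  · congr 1
    exact partialD_congr_of_eventuallyEq (hev y hy) i

theorem diffAt_partialD_of_contDiffAt {f : EuclideanSpace ℝ (Fin n) → ℝ}
    {w : EuclideanSpace ℝ (Fin n)} (hf : ContDiffAt ℝ 2 f w) (k : Fin n) :
    DifferentiableAt ℝ (fun z => partialD k f z) w := by
  have h1 : ContDiffAt ℝ 1 (fderiv ℝ f) w := hf.fderiv_right (le_refl 2)
  exact (ContinuousLinearMap.apply ℝ ℝ (EuclideanSpace.single k 1)).differentiableAt.comp w
    (h1.differentiableAt (by norm_num))

theorem partialD_add_apply {f g : EuclideanSpace ℝ (Fin n) → ℝ} {z : EuclideanSpace ℝ (Fin n)}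
    (hf : DifferentiableAt ℝ f z) (hg : DifferentiableAt ℝ g z) (j : Fin n) :
    partialD j (fun w => f w + g w) z = partialD j f z + partialD j g z := by
  rw [partialD, partialD, partialD, fderiv_fun_add hf hg]; rfl

theorem partialD_const_mul_apply {f : EuclideanSpace ℝ (Fin n) → ℝ} {z : EuclideanSpace ℝ (Fin n)}
    (hf : DifferentiableAt ℝ f z) (c : ℝ) (j : Fin n) :
    partialD j (fun w => c * f w) z = c * partialD j f z := by
  rw [partialD, partialD, fderiv_const_mul hf]; rfl

theorem divA_add {f g : EuclideanSpace ℝ (Fin n) → ℝ} {y : EuclideanSpace ℝ (Fin n)}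
    (hf : ContDiffAt ℝ 2 f y) (hg : ContDiffAt ℝ 2 g y) :
    divA i a (fun z => f z + g z) y = divA i a f y + divA i a g y := by
  have hfe : ∀ᶠ z in nhds y, ContDiffAt ℝ 2 f z := hf.eventually (by simp)
  have hge : ∀ᶠ z in nhds y, ContDiffAt ℝ 2 g z := hg.eventually (by simp)
  rw [divA, divA, divA, lapl, lapl, lapl]
  have h2 : ∀ j : Fin n, partialD j (fun z => partialD j (fun w => f w + g w) z) y
      = partialD j (fun z => partialD j f z) y + partialD j (fun z => partialD j g z) y := by
    intro j
    have hev : (fun z => partialD j (fun w => f w + g w) z)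
        =ᶠ[nhds y] fun z => partialD j f z + partialD j g z := by
      filter_upwards [hfe, hge] with z hfz hgz
      exact partialD_add_apply (hfz.differentiableAt (by norm_num))
        (hgz.differentiableAt (by norm_num)) j
    rw [partialD_congr_of_eventuallyEq hev j]
    exact partialD_add_apply (diffAt_partialD_of_contDiffAt hf j)
      (diffAt_partialD_of_contDiffAt hg j) j
  rw [Finset.sum_congr rfl fun j _ => h2 j, Finset.sum_add_distrib,
    partialD_add_apply (hf.differentiableAt (by norm_num)) (hg.differentiableAt (by norm_num)) i]
  ring

theorem divA_const_mul {f : EuclideanSpace ℝ (Fin n) → ℝ} {y : EuclideanSpace ℝ (Fin n)}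
    (hf : ContDiffAt ℝ 2 f y) (c : ℝ) :
    divA i a (fun z => c * f z) y = c * divA i a f y := by
  have hfe : ∀ᶠ z in nhds y, ContDiffAt ℝ 2 f z := hf.eventually (by simp)
  rw [divA, divA, lapl, lapl]
  have h2 : ∀ j : Fin n, partialD j (fun z => partialD j (fun w => c * f w) z) y
      = c * partialD j (fun z => partialD j f z) y := by
    intro j
    have hev : (fun z => partialD j (fun w => c * f w) z)
        =ᶠ[nhds y] fun z => c * partialD j f z := by
      filter_upwards [hfe] with z hfz
      exact partialD_const_mul_apply (hfz.differentiableAt (by norm_num)) c j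
    rw [partialD_congr_of_eventuallyEq hev j]
    exact partialD_const_mul_apply (diffAt_partialD_of_contDiffAt hf j) c j
  rw [Finset.sum_congr rfl fun j _ => h2 j, ← Finset.mul_sum,
    partialD_const_mul_apply (hf.differentiableAt (by norm_num)) c i]
  ring

end Operator


section KelvinOp

variable {i : Fin n} {a : ℝ}

theorem norm_sub_pos_of_ne {y x : EuclideanSpace ℝ (Fin n)} (hy : y ≠ x) : 0 < ‖y - x‖ := by
  rw [norm_pos_iff, sub_ne_zero]; exact hy

theorem kelvin_eq_V0 (a : ℝ) (x : EuclideanSpace ℝ (Fin n)) (lam : ℝ) (hlam : 0 < lam)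
    (u : EuclideanSpace ℝ (Fin n) → ℝ) {y : EuclideanSpace ℝ (Fin n)} (hy : y ≠ x) :
    kelvin a x lam u y
      = lam ^ ((n : ℝ) - 2 + a) * V0 x lam (-(((n : ℝ) - 2 + a) / 2)) u y := by
  have hr : 0 < ‖y - x‖ := norm_sub_pos_of_ne hy
  rw [kelvin, V0, qf_eq_norm]
  have h1 : (‖y - x‖ ^ 2 : ℝ) ^ (-(((n : ℝ) - 2 + a) / 2)) = ‖y - x‖ ^ (-((n : ℝ) - 2 + a)) := by
    rw [← Real.rpow_natCast ‖y - x‖ 2, ← Real.rpow_mul (norm_nonneg _)]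
    congr 1
    push_cast
    ring
  have h2 : (lam / ‖y - x‖) ^ ((n : ℝ) - 2 + a)
      = lam ^ ((n : ℝ) - 2 + a) * ‖y - x‖ ^ (-((n : ℝ) - 2 + a)) := by
    rw [Real.div_rpow (le_of_lt hlam) (norm_nonneg _), Real.rpow_neg (norm_nonneg _),
      div_eq_mul_inv]
  rw [h1, h2]
  ring

theorem contDiffAt_kelvin (hu2 : ContDiffOn ℝ 2 u {w | 0 < w i}) (hx : x i = 0)
    (hlam : 0 < lam) {y : EuclideanSpace ℝ (Fin n)} (hyi : 0 < y i) (hy : y ≠ x) :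
    ContDiffAt ℝ 2 (kelvin a x lam u) y := by
  have h1 : ContDiffAt ℝ 2
      (fun z => lam ^ ((n : ℝ) - 2 + a) * V0 x lam (-(((n : ℝ) - 2 + a) / 2)) u z) y :=
    contDiffAt_const.mul (contDiffAt_V0 x lam _ u hu2 hx hlam hyi hy)
  refine h1.congr_of_eventuallyEq ?_
  filter_upwards [isOpen_ne.eventually_mem hy] with z (hz : z ≠ x)
  exact kelvin_eq_V0 a x lam hlam u hz

theorem divA_kelvin (hu2 : ContDiffOn ℝ 2 u {w | 0 < w i})
    (heq : ∀ w, 0 < w i → divA i a u w = 0) (hx : x i = 0) (hlam : 0 < lam)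
    {y : EuclideanSpace ℝ (Fin n)} (hyi : 0 < y i) (hy : y ≠ x) :
    divA i a (kelvin a x lam u) y = 0 := by
  have h1 : divA i a (kelvin a x lam u) y
      = divA i a (fun z => lam ^ ((n : ℝ) - 2 + a)
          * V0 x lam (-(((n : ℝ) - 2 + a) / 2)) u z) y := by
    refine divA_congr_open isOpen_ne hy fun z (hz : z ≠ x) => ?_
    exact kelvin_eq_V0 a x lam hlam u hz
  rw [h1, divA_const_mul (contDiffAt_V0 x lam _ u hu2 hx hlam hyi hy),
    divA_V0 x lam _ u hu2 heq hx hlam hyi hy rfl, mul_zero]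

theorem uk_const (k : Fin n) (y : EuclideanSpace ℝ (Fin n)) (c : ℝ) :
    Uk x lam (fun _ => c) k y = 0 := by
  rw [Uk, partialD, fderiv_fun_const]
  simp

theorem partialD_const' (j : Fin n) (c : ℝ) :
    (fun z : EuclideanSpace ℝ (Fin n) => partialD j (fun _ => c) z) = fun _ => (0 : ℝ) := by
  funext z; rw [partialD, fderiv_fun_const]; simp

theorem lapl_const (w : EuclideanSpace ℝ (Fin n)) (c : ℝ) :
    lapl (fun _ : EuclideanSpace ℝ (Fin n) => c) w = 0 := by
  rw [lapl]
  refine Finset.sum_eq_zero fun j _ => ?_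
  rw [partialD_const' j c, partialD, fderiv_fun_const]
  simp

theorem divA_barrier (ha : 0 < (n : ℝ) - 2 + a) (hx : x i = 0) (hlam : 0 < lam)
    {y : EuclideanSpace ℝ (Fin n)} (hyi : 0 < y i) (hy : y ≠ x) :
    divA i a (V0 x lam (-(((n : ℝ) - 2 + a) / 4)) (fun _ => (1 : ℝ))) y < 0 := by
  set e1 : ℝ := -(((n : ℝ) - 2 + a) / 4) with he1
  have hq := qf_pos hy
  have hq0 : qf x y ≠ 0 := ne_of_gt hq
  have hyi0 : y i ≠ 0 := ne_of_gt hyi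
  have hval : divA i a (V0 x lam e1 (fun _ => (1 : ℝ))) y
      = (2 * e1 * (2 * e1 - 2 + n + a)) * (qf x y ^ (e1 - 1) * (y i) ^ a) := by
    rw [divA, lapl_V0 x lam e1 (fun _ => (1 : ℝ)) contDiffOn_const hx hlam hyi hy,
      (hp_V0 x lam e1 (fun _ => (1 : ℝ)) contDiffOn_const hx hlam hyi hy i).partialD_eq, Phi]
    simp only [uk_const, lapl_const, U0, mul_zero, zero_mul, add_zero, mul_one,
      Finset.sum_const_zero, hx, sub_zero]
    have h1 : qf x y ^ (e1 - 1) = qf x y ^ e1 / qf x y := by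
      rw [Real.rpow_sub hq, Real.rpow_one]
    have h2 : qf x y ^ (e1 - 1 - 1) = qf x y ^ e1 / qf x y / qf x y := by
      rw [Real.rpow_sub hq, Real.rpow_one, Real.rpow_sub hq, Real.rpow_one]
    have h3 : (y i) ^ (a - 1) = (y i) ^ a / y i := by
      rw [Real.rpow_sub hyi, Real.rpow_one]
    rw [h1, h2, h3]
    have hrne : qf x y ^ e1 ≠ 0 := ne_of_gt (Real.rpow_pos_of_pos hq _)
    have hane : (y i) ^ a ≠ 0 := ne_of_gt (Real.rpow_pos_of_pos hyi a)
    field_simp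
    ring
  rw [hval]
  have hfac : 2 * e1 * (2 * e1 - 2 + n + a) < 0 := by
    have h1 : 2 * e1 = -(((n : ℝ) - 2 + a) / 2) := by rw [he1]; ring
    have h2 : 2 * e1 - 2 + n + a = ((n : ℝ) - 2 + a) / 2 := by rw [he1]; ring
    rw [h2, h1]
    have : 0 < ((n : ℝ) - 2 + a) / 2 := by linarith
    nlinarith
  have hpos : 0 < qf x y ^ (e1 - 1) * (y i) ^ a :=
    mul_pos (Real.rpow_pos_of_pos hq _) (Real.rpow_pos_of_pos hyi a)
  exact mul_neg_of_neg_of_pos hfac hpos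

end KelvinOp

section MinPrinciple

/-- 1-d second derivative test at a local minimum -/
theorem deriv2_nonneg_of_isLocalMin {h g : ℝ → ℝ} {c : ℝ}
    (hd : ∀ᶠ t in nhds (0 : ℝ), HasDerivAt h (g t) t) (hg0 : g 0 = 0)
    (hg' : HasDerivAt g c 0) (hmin : IsLocalMin h 0) : 0 ≤ c := by
  by_contra hcon
  push_neg at hcon
  have hslope : Filter.Tendsto (slope g 0) (nhdsWithin 0 {0}ᶜ) (nhds c) :=
    hasDerivAt_iff_tendsto_slope.mp hg'
  have hev1 : ∀ᶠ t in nhdsWithin (0 : ℝ) {0}ᶜ, slope g 0 t < c / 2 :=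
    hslope.eventually (Tendsto.eventually_lt_const (by linarith) tendsto_id)
  rw [eventually_nhdsWithin_iff] at hev1
  obtain ⟨δ1, hδ1, hball1⟩ := Metric.eventually_nhds_iff.mp (hd.and (hev1.and hmin))
  set t0 : ℝ := δ1 / 2 with ht0
  have ht0pos : 0 < t0 := by positivity
  have hmem : ∀ t : ℝ, 0 ≤ t → t ≤ t0 → dist t 0 < δ1 := by
    intro t h1 h2
    rw [Real.dist_eq, sub_zero, abs_of_nonneg h1]
    linarith
  -- g is negative on (0, t0]
  have hgneg : ∀ t : ℝ, 0 < t → t ≤ t0 → g t < 0 := by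
    intro t h1 h2
    have := (hball1 (hmem t (le_of_lt h1) h2)).2.1 (by simp [ne_of_gt h1])
    rw [slope_def_field, hg0, sub_zero, sub_zero] at this
    have h3 : g t / t < c / 2 := by simpa [div_eq_mul_inv] using this
    have h4 : g t < (c / 2) * t := by
      rw [div_lt_iff₀ h1] at h3; linarith
    nlinarith
  -- mean value theorem on [0, t0]
  have hcont : ContinuousOn h (Set.Icc 0 t0) := by
    intro t ht
    exact ((hball1 (hmem t ht.1 ht.2)).1.continuousAt).continuousWithinAt
  have hderiv : ∀ t ∈ Set.Ioo (0 : ℝ) t0, HasDerivAt h (g t) t := fun t ht =>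
    (hball1 (hmem t (le_of_lt ht.1) (le_of_lt ht.2))).1
  obtain ⟨ζ, hζ, hζeq⟩ := exists_hasDerivAt_eq_slope h g ht0pos hcont hderiv
  have hneg : g ζ < 0 := hgneg ζ hζ.1 (le_of_lt hζ.2)
  rw [hζeq] at hneg
  have hmin0 : h 0 ≤ h t0 := (hball1 (hmem t0 (le_of_lt ht0pos) le_rfl)).2.2
  rw [sub_zero] at hneg
  have : h t0 - h 0 < 0 := by
    have := div_neg_iff.mp hneg
    rcases this with ⟨h1, h2⟩ | ⟨h1, h2⟩
    · linarith
    · linarith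
  linarith

/-- second partials are nonnegative at an interior local minimum -/
theorem partialD2_nonneg_at_localMin {f : EuclideanSpace ℝ (Fin n) → ℝ}
    {p : EuclideanSpace ℝ (Fin n)} (hf : ContDiffAt ℝ 2 f p) (hmin : IsLocalMin f p)
    (j : Fin n) : 0 ≤ partialD j (fun z => partialD j f z) p := by
  classical
  set v : EuclideanSpace ℝ (Fin n) := EuclideanSpace.single j 1 with hv
  set γ : ℝ → EuclideanSpace ℝ (Fin n) := fun t => p + t • v with hγ
  have hγ0 : γ 0 = p := by simp [hγ]
  have hγcont : Continuous γ := continuous_const.add (continuous_id.smul continuous_const)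
  have hγd : ∀ t : ℝ, HasDerivAt γ v t := fun t => by
    simpa [hγ] using ((hasDerivAt_id t).smul_const v).const_add p
  have htend : Filter.Tendsto γ (nhds 0) (nhds p) := by
    rw [← hγ0]; exact hγcont.tendsto 0
  -- the composed function and its derivative
  have hfe : ∀ᶠ z in nhds p, ContDiffAt ℝ 2 f z := hf.eventually (by simp)
  have hd : ∀ᶠ t in nhds (0 : ℝ), HasDerivAt (fun s => f (γ s)) (partialD j f (γ t)) t := by
    filter_upwards [htend.eventually hfe] with t ht
    have hdf : DifferentiableAt ℝ f (γ t) := ht.differentiableAt (by norm_num)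
    exact hdf.hasFDerivAt.comp_hasDerivAt t (hγd t)
  have hg' : HasDerivAt (fun t => partialD j f (γ t))
      (partialD j (fun z => partialD j f z) p) 0 := by
    have h1 : DifferentiableAt ℝ (fun z => partialD j f z) p :=
      diffAt_partialD_of_contDiffAt hf j
    have h2 : HasFDerivAt (fun z => partialD j f z)
        (fderiv ℝ (fun z => partialD j f z) p) (γ 0) := hγ0 ▸ h1.hasFDerivAt
    have := h2.comp_hasDerivAt 0 (hγd 0)
    exact this
  have hg0 : partialD j f (γ 0) = 0 := by
    rw [hγ0, partialD, hmin.fderiv_eq_zero]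
    simp
  have hminγ : IsLocalMin (fun s => f (γ s)) 0 := by
    have := htend.eventually hmin
    simpa [IsLocalMin, IsMinFilter, hγ0] using this
  exact deriv2_nonneg_of_isLocalMin hd hg0 hg' hminγ

/-- `divA` is nonnegative at an interior local minimum -/
theorem divA_nonneg_at_localMin {i : Fin n} {a : ℝ} {f : EuclideanSpace ℝ (Fin n) → ℝ}
    {p : EuclideanSpace ℝ (Fin n)} (hf : ContDiffAt ℝ 2 f p) (hmin : IsLocalMin f p)
    (hpi : 0 < p i) : 0 ≤ divA i a f p := by
  have h1 : partialD i f p = 0 := by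
    rw [partialD, hmin.fderiv_eq_zero]; simp
  have h2 : 0 ≤ lapl f p :=
    Finset.sum_nonneg fun j _ => partialD2_nonneg_at_localMin hf hmin j
  rw [divA, h1, mul_zero, add_zero]
  exact mul_nonneg (le_of_lt (Real.rpow_pos_of_pos hpi a)) h2

end MinPrinciple

section FinalHelpers

variable {i : Fin n} {a : ℝ}

theorem inversion_self {x z : EuclideanSpace ℝ (Fin n)} {lam : ℝ} (hlam : 0 < lam)
    (hz : ‖z - x‖ = lam) : inversion x lam z = z := by
  have hz0 : z ≠ x := by
    intro h; rw [h] at hz; simp at hz; exact (ne_of_gt hlam) hz.symm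
  rw [inversion, hz]
  have : lam ^ 2 / lam ^ 2 = (1 : ℝ) := by
    field_simp
  rw [this, one_smul]
  abel

theorem norm_inversion_sub {x z : EuclideanSpace ℝ (Fin n)} {lam : ℝ} (hlam : 0 < lam)
    (hz : z ≠ x) : ‖inversion x lam z - x‖ = lam ^ 2 / ‖z - x‖ := by
  have hr : 0 < ‖z - x‖ := norm_sub_pos_of_ne hz
  rw [inversion]
  have h1 : x + (lam ^ 2 / ‖z - x‖ ^ 2) • (z - x) - x = (lam ^ 2 / ‖z - x‖ ^ 2) • (z - x) := by
    abel
  rw [h1, norm_smul]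
  rw [Real.norm_eq_abs, abs_of_pos (by positivity)]
  field_simp

theorem inversion_coord_nonneg {x z : EuclideanSpace ℝ (Fin n)} {lam : ℝ}
    (hx : x i = 0) (hz : z ≠ x) (hzi : 0 ≤ z i) : 0 ≤ inversion x lam z i := by
  rw [inversion_coord x lam z i hx]
  have := qf_pos hz
  positivity

theorem continuousOn_qf (x : EuclideanSpace ℝ (Fin n)) : Continuous (qf x) := by
  apply continuous_finset_sum
  intro k _
  exact (((EuclideanSpace.proj (𝕜 := ℝ) k).continuous).sub continuous_const).pow 2

theorem continuousOn_inversion (x : EuclideanSpace ℝ (Fin n)) (lam : ℝ) :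
    ContinuousOn (inversion x lam) {z | z ≠ x} := by
  have heq : ∀ z ∈ {z : EuclideanSpace ℝ (Fin n) | z ≠ x}, inversion x lam z
      = x + (lam ^ 2 * (qf x z)⁻¹) • (z - x) := fun z _ => by
    rw [inversion_eq, div_eq_mul_inv]
  refine ContinuousOn.congr ?_ heq
  refine ContinuousOn.add continuousOn_const ?_
  refine ContinuousOn.smul (?_ : ContinuousOn (fun z => lam ^ 2 * (qf x z)⁻¹) _) (continuous_id.sub continuous_const : Continuous fun z : EuclideanSpace ℝ (Fin n) => z - x).continuousOn
  exact continuousOn_const.mul ((continuousOn_qf x).continuousOn.inv₀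
    fun z hz => ne_of_gt (qf_pos hz))

theorem continuousOn_V0_barrier (x : EuclideanSpace ℝ (Fin n)) (lam : ℝ) (e : ℝ) :
    ContinuousOn (V0 x lam e (fun _ => (1 : ℝ))) {z | z ≠ x} := by
  have heq : ∀ z ∈ {z : EuclideanSpace ℝ (Fin n) | z ≠ x},
      V0 x lam e (fun _ => (1 : ℝ)) z = qf x z ^ e := fun z _ => by rw [V0, mul_one]
  refine ContinuousOn.congr ?_ heq
  exact ContinuousOn.rpow_const (continuousOn_qf x).continuousOn
    fun z hz => Or.inl (ne_of_gt (qf_pos hz))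

theorem continuousOn_kelvin (u : EuclideanSpace ℝ (Fin n) → ℝ)
    (hu0 : ContinuousOn u {w | 0 ≤ w i}) (x : EuclideanSpace ℝ (Fin n)) (hx : x i = 0)
    (lam : ℝ) (hlam : 0 < lam) :
    ContinuousOn (kelvin a x lam u) {z | z ≠ x ∧ 0 ≤ z i} := by
  have h1 : ContinuousOn (fun z : EuclideanSpace ℝ (Fin n) => (lam / ‖z - x‖) ^ ((n : ℝ) - 2 + a))
      {z : EuclideanSpace ℝ (Fin n) | z ≠ x ∧ 0 ≤ z i} := by
    refine ContinuousOn.rpow_const ?_ fun z hz => Or.inl ?_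
    · exact continuousOn_const.div ((continuous_id.sub continuous_const).norm).continuousOn
        fun z hz => ne_of_gt (norm_sub_pos_of_ne hz.1)
    · have h2 := norm_sub_pos_of_ne hz.1
      positivity
  have h2 : ContinuousOn (fun z => u (inversion x lam z))
      {z : EuclideanSpace ℝ (Fin n) | z ≠ x ∧ 0 ≤ z i} := by
    refine ContinuousOn.comp hu0 ((continuousOn_inversion x lam).mono fun z hz => hz.1) ?_
    intro z hz
    exact inversion_coord_nonneg hx hz.1 hz.2
  exact h1.mul h2

theorem u_ge_half (u : EuclideanSpace ℝ (Fin n) → ℝ)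
    (hlow : ∀ y : EuclideanSpace ℝ (Fin n), 0 < y i → 1 / 2 < u y)
    (hbdry : ∀ y : EuclideanSpace ℝ (Fin n), y i = 0 → u y = 1)
    {w : EuclideanSpace ℝ (Fin n)} (hw : 0 ≤ w i) : 1 / 2 ≤ u w := by
  rcases eq_or_lt_of_le hw with h | h
  · rw [hbdry w h.symm]; norm_num
  · exact le_of_lt (hlow w h)

end FinalHelpers

end MS


open MS in
/-- **Lemma 3.2 (moving sphere, case `a > 2-n`).** Under the hypotheses of Theorem 3.1,
for every `x ∈ ∂ℝⁿ₊` and `λ > 0` one has `u_{x,λ}(y) ≤ u(y)` for all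
`y ∈ ℝⁿ₊ \ B_λ(x)`. -/
theorem moving_sphere_case1 (n : ℕ) (hn : 2 ≤ n) (a : ℝ) (ha : 2 - (n : ℝ) < a)
    (i : Fin n) (hi : (i : ℕ) = n - 1)
    (u : EuclideanSpace ℝ (Fin n) → ℝ)
    (hu2 : ContDiffOn ℝ 2 u {y | 0 < y i})
    (hu0 : ContinuousOn u {y | 0 ≤ y i})
    (heq : ∀ y, 0 < y i → divA i a u y = 0)
    (hlow : ∀ y : EuclideanSpace ℝ (Fin n), 0 < y i → 1 / 2 < u y)
    (hbdry : ∀ y : EuclideanSpace ℝ (Fin n), y i = 0 → u y = 1) :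
    ∀ x : EuclideanSpace ℝ (Fin n), x i = 0 → ∀ lam : ℝ, 0 < lam →
      ∀ y : EuclideanSpace ℝ (Fin n), 0 < y i → lam ≤ ‖y - x‖ →
        kelvin a x lam u y ≤ u y := by
  intro x hx lam hlam y₀ hy₀i hy₀r
  have hs : 0 < (n : ℝ) - 2 + a := by
    have h2n : (2 : ℝ) ≤ (n : ℝ) := by exact_mod_cast hn
    linarith
  set s : ℝ := (n : ℝ) - 2 + a with hs_def
  set e1 : ℝ := -(s / 4) with he1_def
  set gb : EuclideanSpace ℝ (Fin n) → ℝ := V0 x lam e1 (fun _ => (1 : ℝ)) with hgb_def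
  have hgb_pos : ∀ z : EuclideanSpace ℝ (Fin n), z ≠ x → 0 < gb z := by
    intro z hz
    rw [hgb_def, V0, mul_one]
    exact Real.rpow_pos_of_pos (qf_pos hz) e1
  have hr₀ : 0 < ‖y₀ - x‖ := lt_of_lt_of_le hlam hy₀r
  have hy₀x : y₀ ≠ x := by
    intro h; rw [h] at hr₀; simp at hr₀
  -- choose δ such that u < 2 on the half-space near x
  have hux : u x = 1 := hbdry x hx
  have hcx : ContinuousWithinAt u {w : EuclideanSpace ℝ (Fin n) | 0 ≤ w i} x := by
    refine hu0 x ?_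
    simp [Set.mem_setOf_eq, hx]
  obtain ⟨δ, hδ, hδprop⟩ := Metric.continuousWithinAt_iff.mp hcx 1 (by norm_num)
  have hu_lt_two : ∀ w : EuclideanSpace ℝ (Fin n), 0 ≤ w i → dist w x < δ → u w < 2 := by
    intro w hwi hwd
    have := hδprop hwi hwd
    rw [hux, Real.dist_eq] at this
    have := abs_lt.mp this
    linarith [this.2]
  -- choose R
  set η : ℝ := (4 : ℝ)⁻¹ ^ s⁻¹ with hη_def
  have hηpos : 0 < η := Real.rpow_pos_of_pos (by norm_num) _
  have hηs : η ^ s = (4 : ℝ)⁻¹ := by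
    rw [hη_def, ← Real.rpow_mul (by norm_num), inv_mul_cancel₀ (ne_of_gt hs), Real.rpow_one]
  set R : ℝ := max (lam / η) (max (lam ^ 2 / δ) (max lam ‖y₀ - x‖)) + 1 with hR_def
  have hRpos : 0 < R := by
    have h1 : lam ≤ max (lam / η) (max (lam ^ 2 / δ) (max lam ‖y₀ - x‖)) :=
      le_trans (le_max_left lam ‖y₀ - x‖) (le_trans (le_max_right _ _) (le_max_right _ _))
    rw [hR_def]; linarith
  have hRlam : lam < R := by
    have h1 : lam ≤ max (lam / η) (max (lam ^ 2 / δ) (max lam ‖y₀ - x‖)) :=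
      le_trans (le_max_left lam ‖y₀ - x‖) (le_trans (le_max_right _ _) (le_max_right _ _))
    rw [hR_def]; linarith
  have hRy₀ : ‖y₀ - x‖ ≤ R := by
    have h1 : ‖y₀ - x‖ ≤ max (lam / η) (max (lam ^ 2 / δ) (max lam ‖y₀ - x‖)) :=
      le_trans (le_max_right lam ‖y₀ - x‖) (le_trans (le_max_right _ _) (le_max_right _ _))
    rw [hR_def]; linarith
  have hRη : lam / R < η := by
    have h1 : lam / η < R := by
      have := le_max_left (lam / η) (max (lam ^ 2 / δ) (max lam ‖y₀ - x‖))
      rw [hR_def]; linarith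
    rw [div_lt_iff₀ hRpos]
    rw [div_lt_iff₀ hηpos] at h1
    linarith [mul_comm η R]
  have hRδ : lam ^ 2 / δ < R := by
    have h1 : lam ^ 2 / δ ≤ max (lam / η) (max (lam ^ 2 / δ) (max lam ‖y₀ - x‖)) :=
      le_trans (le_max_left (lam ^ 2 / δ) (max lam ‖y₀ - x‖))
        (le_max_right (lam / η) (max (lam ^ 2 / δ) (max lam ‖y₀ - x‖)))
    rw [hR_def]; linarith
  -- the decay estimate for kelvin
  have hdecay : ∀ z : EuclideanSpace ℝ (Fin n), 0 ≤ z i → R ≤ ‖z - x‖ →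
      kelvin a x lam u z < 1 / 2 := by
    intro z hzi hzR
    have hzr : 0 < ‖z - x‖ := lt_of_lt_of_le hRpos hzR
    have hzx : z ≠ x := by intro h; rw [h] at hzr; simp at hzr
    have hinv_dist : ‖inversion x lam z - x‖ = lam ^ 2 / ‖z - x‖ :=
      norm_inversion_sub hlam hzx
    have hinv_close : dist (inversion x lam z) x < δ := by
      rw [dist_eq_norm, hinv_dist]
      rw [div_lt_iff₀ hδ] at hRδ
      rw [div_lt_iff₀ hzr]
      calc lam ^ 2 < R * δ := hRδ
      _ ≤ ‖z - x‖ * δ := by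
        exact mul_le_mul_of_nonneg_right hzR (le_of_lt hδ)
      _ = δ * ‖z - x‖ := by ring
    have hinv_i : 0 ≤ inversion x lam z i := inversion_coord_nonneg hx hzx hzi
    have huval : u (inversion x lam z) < 2 := hu_lt_two _ hinv_i hinv_close
    have huval0 : 0 < u (inversion x lam z) := lt_of_lt_of_le (by norm_num)
      (u_ge_half u hlow hbdry hinv_i)
    rw [kelvin]
    have hbase : (0:ℝ) ≤ lam / ‖z - x‖ := by positivity
    have hbase2 : lam / ‖z - x‖ ≤ lam / R :=
      div_le_div_of_nonneg_left (le_of_lt hlam) hRpos hzR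
    have hrp1 : (lam / ‖z - x‖) ^ s ≤ (lam / R) ^ s :=
      Real.rpow_le_rpow hbase hbase2 (le_of_lt hs)
    have hrp2 : (lam / R) ^ s < η ^ s :=
      Real.rpow_lt_rpow (by positivity) hRη hs
    have hrp3 : (lam / ‖z - x‖) ^ s < (4:ℝ)⁻¹ := by
      rw [← hηs]; exact lt_of_le_of_lt hrp1 hrp2
    have hrppos : 0 < (lam / ‖z - x‖) ^ s := Real.rpow_pos_of_pos (by positivity) s
    calc (lam / ‖z - x‖) ^ s * u (inversion x lam z)
        < (4:ℝ)⁻¹ * 2 := by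
          apply mul_lt_mul' (le_of_lt hrp3) huval (le_of_lt huval0) (by norm_num)
    _ = 1 / 2 := by norm_num
  -- the compact region
  set K : Set (EuclideanSpace ℝ (Fin n)) :=
    {z | 0 ≤ z i ∧ lam ≤ ‖z - x‖ ∧ ‖z - x‖ ≤ R} with hK_def
  have hKx : ∀ z ∈ K, z ≠ x := by
    rintro z ⟨-, h2, -⟩ rfl
    simp at h2
    linarith
  have hKcompact : IsCompact K := by
    have hclosed : IsClosed K := by
      refine IsClosed.inter (isClosed_le continuous_const
        (EuclideanSpace.proj (𝕜 := ℝ) i).continuous) (IsClosed.inter ?_ ?_)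
      · exact isClosed_le continuous_const (continuous_id.sub continuous_const).norm
      · exact isClosed_le (continuous_id.sub continuous_const).norm continuous_const
    refine IsCompact.of_isClosed_subset (isCompact_closedBall x R) hclosed ?_
    intro z hz
    rw [Metric.mem_closedBall, dist_eq_norm]
    exact hz.2.2
  have hy₀K : y₀ ∈ K := ⟨le_of_lt hy₀i, hy₀r, hRy₀⟩
  -- the main estimate
  have key : ∀ ε : ℝ, 0 < ε →
      0 < u y₀ + (-1 * kelvin a x lam u y₀ + ε * gb y₀) := by
    intro ε hε
    set φ : EuclideanSpace ℝ (Fin n) → ℝ :=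
      fun z => u z + (-1 * kelvin a x lam u z + ε * gb z) with hφ_def
    have hφc : ContinuousOn φ K := by
      refine ContinuousOn.add (hu0.mono fun z hz => hz.1) (ContinuousOn.add ?_ ?_)
      · exact continuousOn_const.mul ((continuousOn_kelvin u hu0 x hx lam hlam).mono
          fun z hz => ⟨hKx z hz, hz.1⟩)
      · exact continuousOn_const.mul ((continuousOn_V0_barrier x lam e1).mono
          fun z hz => hKx z hz)
    obtain ⟨p, hpK, hpmin⟩ := hKcompact.exists_isMinOn ⟨y₀, hy₀K⟩ hφc
    have hφval : ∀ z, φ z = u z + (-1 * kelvin a x lam u z + ε * gb z) := fun z => rfl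
    have hεgb : ∀ z, z ≠ x → 0 < ε * gb z := fun z hz => mul_pos hε (hgb_pos z hz)
    suffices hφp : 0 < φ p by
      have h2 := isMinOn_iff.mp hpmin y₀ hy₀K
      rw [hφval y₀, hφval p] at h2
      rw [hφval p] at hφp
      linarith
    obtain ⟨hpi, hplam, hpR⟩ := hpK
    have hpx : p ≠ x := hKx p ⟨hpi, hplam, hpR⟩
    have hgbp : 0 < gb p := hgb_pos p hpx
    have hpr : 0 < ‖p - x‖ := lt_of_lt_of_le hlam hplam
    rcases eq_or_lt_of_le hpi with hpi0 | hpi0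
    · -- case A : p on the boundary hyperplane
      have hup : u p = 1 := hbdry p hpi0.symm
      have hinvpi : inversion x lam p i = 0 := by
        rw [inversion_coord x lam p i hx, ← hpi0, mul_zero]
      have hkel : kelvin a x lam u p ≤ 1 := by
        rw [kelvin, hbdry _ hinvpi, mul_one]
        refine Real.rpow_le_one (by positivity) ?_ (le_of_lt hs)
        rw [div_le_one hpr]; exact hplam
      rw [hφval p, hup]
      linarith [hεgb p hpx]
    · rcases eq_or_lt_of_le hplam with hpsph | hpsph
      · -- case B1 : p on the inner sphere
        have hinvp : inversion x lam p = p := inversion_self hlam hpsph.symm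
        have hkel : kelvin a x lam u p = u p := by
          rw [kelvin, hinvp, ← hpsph, div_self (ne_of_gt hlam), Real.one_rpow, one_mul]
        rw [hφval p, hkel]
        linarith [hεgb p hpx]
      · rcases eq_or_lt_of_le hpR with hpRe | hpRe
        · -- case B2a : p on the outer sphere
          have hkel : kelvin a x lam u p < 1 / 2 := hdecay p hpi (le_of_eq hpRe.symm)
          have hup : 1 / 2 < u p := hlow p hpi0
          rw [hφval p]
          linarith [hεgb p hpx]
        · -- case B2b : p interior, contradiction via the maximum principle
          exfalso
          set O : Set (EuclideanSpace ℝ (Fin n)) :=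
            {z | 0 < z i ∧ lam < ‖z - x‖ ∧ ‖z - x‖ < R} with hO_def
          have hOopen : IsOpen O := by
            refine IsOpen.inter (isOpen_lt continuous_const
              (EuclideanSpace.proj (𝕜 := ℝ) i).continuous) (IsOpen.inter ?_ ?_)
            · exact isOpen_lt continuous_const (continuous_id.sub continuous_const).norm
            · exact isOpen_lt (continuous_id.sub continuous_const).norm continuous_const
          have hOK : O ⊆ K := fun z hz => ⟨le_of_lt hz.1, le_of_lt hz.2.1, le_of_lt hz.2.2⟩
          have hpO : p ∈ O := ⟨hpi0, hpsph, hpRe⟩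
          have hlocal : IsLocalMin φ p :=
            hpmin.isLocalMin (Filter.mem_of_superset (hOopen.mem_nhds hpO) hOK)
          have hopen_half : IsOpen {w : EuclideanSpace ℝ (Fin n) | 0 < w i} :=
            isOpen_lt continuous_const (EuclideanSpace.proj (𝕜 := ℝ) i).continuous
          have hCu : ContDiffAt ℝ 2 u p := hu2.contDiffAt (hopen_half.mem_nhds hpi0)
          have hCk : ContDiffAt ℝ 2 (kelvin a x lam u) p :=
            contDiffAt_kelvin hu2 hx hlam hpi0 hpx
          have hCg : ContDiffAt ℝ 2 gb p :=
            contDiffAt_V0 x lam e1 (fun _ => (1 : ℝ)) contDiffOn_const hx hlam hpi0 hpx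
          have hdiv : divA i a φ p
              = divA i a u p + (-1 * divA i a (kelvin a x lam u) p + ε * divA i a gb p) := by
            rw [hφ_def]
            rw [divA_add hCu ((contDiffAt_const.mul hCk).add (contDiffAt_const.mul hCg))]
            rw [divA_add (contDiffAt_const.mul hCk) (contDiffAt_const.mul hCg)]
            rw [divA_const_mul hCk (-1), divA_const_mul hCg ε]
          have hval : divA i a φ p < 0 := by
            rw [hdiv, heq p hpi0, divA_kelvin hu2 heq hx hlam hpi0 hpx]
            have hbar : divA i a gb p < 0 := divA_barrier hs hx hlam hpi0 hpx
            nlinarith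
          have hnn : 0 ≤ divA i a φ p :=
            divA_nonneg_at_localMin
              (hCu.add ((contDiffAt_const.mul hCk).add (contDiffAt_const.mul hCg))) hlocal hpi0
          linarith
  -- conclude by letting ε → 0
  have hgby₀ : 0 < gb y₀ := hgb_pos y₀ hy₀x
  by_contra hcon
  push_neg at hcon
  set m : ℝ := kelvin a x lam u y₀ - u y₀ with hm_def
  have hm : 0 < m := by rw [hm_def]; linarith
  have := key (m / (2 * gb y₀)) (by positivity)
  have hcalc : m / (2 * gb y₀) * gb y₀ = m / 2 := by
    field_simp
  rw [hcalc] at this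
  rw [hm_def] at this
  linarith
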